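/- Let φ be an exponential map on a k-domain B and let k̄ be an algebraic closure of k. Then φ ⊗ id is an exponential map on B ⊗_k k̄ whose ring of invariants is B^φ ⊗_k k̄, and it is non-trivial whenever φ is non-trivial. -/

import Mathlib

open Polynomial TensorProduct

section
variable {k B K : Type*} [Field k] [CommRing B] [Algebra k B] [Field K] [Algebra k K]

noncomputable def psiHom (φ : B →ₐ[k] Polynomial B) :
    K ⊗[k] B →ₐ[K] Polynomial (K ⊗[k] B) :=
  Algebra.TensorProduct.lift (Algebra.ofId K _)
    ((Polynomial.mapAlgHom (Algebra.TensorProduct.includeRight)).comp φ)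
    (fun _ _ => Commute.all _ _)

lemma psiHom_tmul (φ : B →ₐ[k] Polynomial B) (a : K) (b : B) :
    psiHom (K := K) φ (a ⊗ₜ b) =
      C (a ⊗ₜ 1) * (φ b).map (Algebra.TensorProduct.includeRight :
        B →ₐ[k] K ⊗[k] B).toRingHom := by
  simp [psiHom, Algebra.ofId_apply, Polynomial.algebraMap_apply]

lemma psiHom_eval_zero (φ : B →ₐ[k] Polynomial B) (h : ∀ b, (φ b).eval 0 = b)
    (x : K ⊗[k] B) : (psiHom (K := K) φ x).eval 0 = x := by
  induction x with
  | zero => simp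
  | tmul a b =>
      rw [psiHom_tmul]
      simp [eval_map, eval₂_at_zero, coeff_zero_eq_eval_zero, h]
  | add x y hx hy => rw [map_add, eval_add, hx, hy]

-- coefficient maps
noncomputable def coeffL (φ : B →ₐ[k] Polynomial B) (n : ℕ) : B →ₗ[k] B :=
  (Polynomial.lcoeff B n).restrictScalars k ∘ₗ φ.toLinearMap

lemma psiHom_coeff (φ : B →ₐ[k] Polynomial B) (n : ℕ) (x : K ⊗[k] B) :
    (psiHom (K := K) φ x).coeff n =
      LinearMap.lTensor K (coeffL φ n) x := by
  induction x with
  | zero => simp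
  | tmul a b =>
      rw [psiHom_tmul]
      simp [coeff_map, coeffL, Algebra.TensorProduct.tmul_mul_tmul]
  | add x y hx hy => rw [map_add, coeff_add, hx, hy, map_add]
end

section
variable {k B K : Type*} [Field k] [CommRing B] [Algebra k B] [Field K] [Algebra k K]

lemma psiHom_comp_CR (φ : B →ₐ[k] Polynomial B) :
    (psiHom (K := K) φ).toRingHom.comp
        (Algebra.TensorProduct.includeRight : B →ₐ[k] K ⊗[k] B).toRingHom =
      (mapRingHom (Algebra.TensorProduct.includeRight :
          B →ₐ[k] K ⊗[k] B).toRingHom).comp φ.toRingHom := by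
  refine RingHom.ext fun b => ?_
  show psiHom (K := K) φ ((1:K) ⊗ₜ b) = _
  rw [psiHom_tmul, ← Algebra.TensorProduct.one_def, map_one, one_mul]
  rfl

lemma psiHom_coassoc (φ : B →ₐ[k] Polynomial B)
    (hco : ∀ b, (φ b).map φ.toRingHom =
      eval₂ ((C : Polynomial B →+* Polynomial (Polynomial B)).comp (C : B →+* Polynomial B))
        (C X + X) (φ b)) (x : K ⊗[k] B) :
    (psiHom (K := K) φ x).map (psiHom (K := K) φ).toRingHom =
      eval₂ ((C : Polynomial (K ⊗[k] B) →+* Polynomial (Polynomial (K ⊗[k] B))).comp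
        (C : (K ⊗[k] B) →+* Polynomial (K ⊗[k] B))) (C X + X) (psiHom (K := K) φ x) := by
  set CR := (Algebra.TensorProduct.includeRight : B →ₐ[k] K ⊗[k] B).toRingHom with hCR
  induction x with
  | zero => simp
  | add x y hx hy => rw [map_add, Polynomial.map_add, hx, hy, eval₂_add]
  | tmul a b =>
      rw [psiHom_tmul, Polynomial.map_mul, Polynomial.map_C, Polynomial.map_map,
        psiHom_comp_CR, ← Polynomial.map_map, hco b, ← Polynomial.coe_mapRingHom,
        Polynomial.hom_eval₂]
      have hc : ∀ n : ℕ, Commute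
          (((C : Polynomial (K ⊗[k] B) →+* Polynomial (Polynomial (K ⊗[k] B))).comp
            (C : (K ⊗[k] B) →+* Polynomial (K ⊗[k] B)))
            ((Polynomial.map CR (φ b)).coeff n)) (C X + X) := fun n => Commute.all (S := Polynomial (Polynomial (K ⊗[k] B))) _ _
      conv_rhs => rw [eval₂_mul_noncomm _ _ hc, eval₂_C, eval₂_map]
      congr 1
      · show C (psiHom (K := K) φ (a ⊗ₜ 1)) = _
        rw [psiHom_tmul]
        simp
      · congr 1
        · refine RingHom.ext fun c => ?_
          simp [Polynomial.map_C]
          rfl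
        · simp
end

section Invariants
open scoped Classical
variable {k B K : Type*} [Field k] [CommRing B] [Algebra k B] [Field K] [Algebra k K]

noncomputable def EE : K ⊗[k] B ≃ₗ[k] (Module.Basis.ofVectorSpaceIndex k K →₀ B) :=
  (TensorProduct.congr (Module.Basis.ofVectorSpace k K).repr (LinearEquiv.refl k B)).trans
    (TensorProduct.finsuppScalarLeft k B _)

lemma EE_tmul_apply (a : K) (b : B) (i) :
    EE (B := B) (a ⊗ₜ[k] b) i = (Module.Basis.ofVectorSpace k K).repr a i • b := by
  simp [EE]

lemma EE_symm_single (i) (b : B) :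
    (EE (K := K) (B := B)).symm (Finsupp.single i b) = Module.Basis.ofVectorSpace k K i ⊗ₜ[k] b := by
  simp [EE, TensorProduct.finsuppScalarLeft_symm_apply_single, Module.Basis.repr_symm_single_one]

lemma EE_rep (x : K ⊗[k] B) :
    x = (EE x).sum fun i b => Module.Basis.ofVectorSpace k K i ⊗ₜ[k] b := by
  conv_lhs => rw [← (EE (K := K) (B := B)).symm_apply_apply x, ← Finsupp.sum_single (EE x)]
  rw [map_finsuppSum]
  exact Finsupp.sum_congr fun i _ => EE_symm_single i _

lemma EE_lTensor_apply (f : B →ₗ[k] B) (x : K ⊗[k] B) (i) :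
    EE (LinearMap.lTensor K f x) i = f (EE x i) := by
  induction x with
  | zero => simp
  | tmul a b => simp [EE_tmul_apply]
  | add x y hx hy => simp [map_add, Finsupp.add_apply, hx, hy]
end Invariants

section Char
variable {k B K : Type*} [Field k] [CommRing B] [Algebra k B] [Field K] [Algebra k K]

lemma inv_char (φ : B →ₐ[k] Polynomial B) (h : ∀ b, (φ b).eval 0 = b) (b : B) :
    φ b = C b ↔ ∀ n, n ≠ 0 → coeffL φ n b = 0 := by
  constructor
  · intro hb n hn
    simp [coeffL, hb, coeff_C, hn]
  · intro hb
    ext n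
    cases n with
    | zero => rw [coeff_zero_eq_eval_zero, h, coeff_C_zero]
    | succ m =>
        have := hb (m + 1) (by omega)
        simp [coeffL] at this
        simp [this, coeff_C]

lemma psi_inv_char (φ : B →ₐ[k] Polynomial B) (h : ∀ b, (φ b).eval 0 = b) (x : K ⊗[k] B) :
    psiHom (K := K) φ x = C x ↔
      ∀ n, n ≠ 0 → LinearMap.lTensor K (coeffL φ n) x = 0 := by
  constructor
  · intro hx n hn
    rw [← psiHom_coeff, hx, coeff_C]
    simp [hn]
  · intro hx
    ext n
    cases n with
    | zero => rw [coeff_zero_eq_eval_zero, psiHom_eval_zero φ h, coeff_C_zero]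
    | succ m =>
        rw [psiHom_coeff, hx (m + 1) (by omega), coeff_C]
        simp
end Char


open Polynomial in
structure ExpMap (k B : Type*) [CommRing k] [CommRing B] [Algebra k B] where
  toAlgHom : B →ₐ[k] Polynomial B
  eval_zero : ∀ b, (toAlgHom b).eval 0 = b
  coassoc : ∀ b, (toAlgHom b).map toAlgHom.toRingHom =
      Polynomial.eval₂ ((C : Polynomial B →+* Polynomial (Polynomial B)).comp
        (C : B →+* Polynomial B)) (C X + X) (toAlgHom b)

noncomputable def ExpMap.invariants {k B : Type*} [CommRing k] [CommRing B] [Algebra k B]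
    (φ : ExpMap k B) : Subalgebra k B :=
  AlgHom.equalizer φ.toAlgHom (Polynomial.CAlgHom)

open TensorProduct in
/-- Base change of an exponential map to the algebraic closure: φ ⊗ id is an
exponential map on k̄ ⊗ₖ B whose invariant ring is B^φ ⊗ₖ k̄ (the k̄-subalgebra
generated by the image of B^φ), and it is non-trivial whenever φ is. -/
theorem expMap_baseChange
    {k B : Type*} [Field k] [CommRing B] [IsDomain B] [Algebra k B]
    (φ : ExpMap k B) :
    ∃ ψ : ExpMap (AlgebraicClosure k) (AlgebraicClosure k ⊗[k] B),
      (∀ b : B, ψ.toAlgHom ((1 : AlgebraicClosure k) ⊗ₜ[k] b)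
          = (φ.toAlgHom b).map
              (Algebra.TensorProduct.includeRight :
                B →ₐ[k] AlgebraicClosure k ⊗[k] B).toRingHom) ∧
      ψ.invariants = Algebra.adjoin (AlgebraicClosure k)
          ((Algebra.TensorProduct.includeRight :
              B →ₐ[k] AlgebraicClosure k ⊗[k] B) '' (φ.invariants : Set B)) ∧
      (φ.invariants ≠ ⊤ → ψ.invariants ≠ ⊤) := by
  set K := AlgebraicClosure k
  set e := Module.Basis.ofVectorSpace k K
  refine ⟨⟨psiHom φ.toAlgHom, psiHom_eval_zero _ φ.eval_zero, psiHom_coassoc _ φ.coassoc⟩,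
    fun b => ?_, ?_, ?_⟩
  · rw [psiHom_tmul, ← Algebra.TensorProduct.one_def, map_one, one_mul]
  · apply le_antisymm
    · intro x hx
      rw [ExpMap.invariants, AlgHom.mem_equalizer] at hx
      replace hx : psiHom (K := K) φ.toAlgHom x = C x := hx
      have hx' := (psi_inv_char _ φ.eval_zero x).1 hx
      have hbi : ∀ i, EE x i ∈ φ.invariants := by
        intro i
        rw [ExpMap.invariants, AlgHom.mem_equalizer]
        show φ.toAlgHom _ = C _
        rw [inv_char _ φ.eval_zero]
        intro n hn
        have h2 := EE_lTensor_apply (coeffL φ.toAlgHom n) x i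
        rw [hx' n hn] at h2
        simpa using h2.symm
      rw [EE_rep x, Finsupp.sum]
      refine Subalgebra.sum_mem _ fun i _ => ?_
      have : (e i : K) ⊗ₜ[k] (EE x i) = (e i : K) • ((1 : K) ⊗ₜ[k] (EE x i)) := by
        rw [TensorProduct.smul_tmul', smul_eq_mul, mul_one]
      rw [this]
      exact Subalgebra.smul_mem _ (Algebra.subset_adjoin (Set.mem_image_of_mem _ (hbi i))) _
    · rw [Algebra.adjoin_le_iff]
      rintro _ ⟨b, hb, rfl⟩
      rw [SetLike.mem_coe, ExpMap.invariants, AlgHom.mem_equalizer]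
      show psiHom (K := K) φ.toAlgHom ((1:K) ⊗ₜ[k] b) = C ((1:K) ⊗ₜ[k] b)
      rw [ExpMap.invariants, SetLike.mem_coe, AlgHom.mem_equalizer] at hb
      replace hb : φ.toAlgHom b = C b := hb
      rw [psiHom_tmul, hb, Polynomial.map_C, ← Polynomial.C_mul,
        ← Algebra.TensorProduct.one_def, one_mul]
      rfl
  · intro hφ hψ
    apply hφ
    rw [eq_top_iff]
    intro b _
    have h1 : ((1:K) ⊗ₜ[k] b) ∈ (⊤ : Subalgebra K (K ⊗[k] B)) := trivial
    rw [← hψ, ExpMap.invariants, AlgHom.mem_equalizer] at h1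
    replace h1 : psiHom (K := K) φ.toAlgHom ((1:K) ⊗ₜ[k] b) = C ((1:K) ⊗ₜ[k] b) := h1
    have h2 := (psi_inv_char _ φ.eval_zero _).1 h1
    have hone : e.repr (1 : K) ≠ 0 := by
      simp [map_eq_zero_iff, e.repr.injective]
    obtain ⟨i, hi⟩ := Finsupp.ne_iff.1 hone
    rw [ExpMap.invariants, AlgHom.mem_equalizer]
    show φ.toAlgHom b = C b
    rw [inv_char _ φ.eval_zero]
    intro n hn
    have h3 := EE_lTensor_apply (coeffL φ.toAlgHom n) ((1:K) ⊗ₜ[k] b) i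
    rw [h2 n hn] at h3
    rw [EE_tmul_apply] at h3
    simp only [Finsupp.coe_zero, Pi.zero_apply, map_smul] at h3
    have := h3.symm
    rcases smul_eq_zero.1 this with h | h
    · exact absurd h (by simpa using hi)
    · exact h
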